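/- The prime Chacon map T is totally ergodic: for every integer n ≥ 1, the transformation T^n is ergodic with respect to μ. -/

import Mathlib

open MeasureTheory Filter Topology
open scoped symmDiff

/-- A Chacon-type rank-one map (cutting into 3, spacer sequence `s` over the middle
column), acting on a probability space `(X, μ)`. -/
structure ChaconMap {X : Type*} [MeasurableSpace X]
    (μ : Measure X) (s : ℕ → ℕ) : Type _ where
  /-- The transformation, an invertible bimeasurable map. -/
  T : X ≃ᵐ X
  measurePreserving : MeasurePreserving T μ μ
  /-- The tower heights (number of levels is `h j + 1`). -/
  h : ℕ → ℕ
  h_one : h 1 = 1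
  h_succ : ∀ j, 1 ≤ j → h (j + 1) = 3 * h j + 2 + s j
  /-- The base of the `j`-th tower. -/
  E : ℕ → Set X
  E1 : ℕ → Set X
  E2 : ℕ → Set X
  E3 : ℕ → Set X
  measE : ∀ j, MeasurableSet (E j)
  measE1 : ∀ j, MeasurableSet (E1 j)
  measE2 : ∀ j, MeasurableSet (E2 j)
  measE3 : ∀ j, MeasurableSet (E3 j)
  /-- (i) the levels of the `j`-th tower are pairwise disjoint. -/
  tower_disjoint : ∀ j, 1 ≤ j → ∀ i ≤ h j, ∀ i' ≤ h j, i ≠ i' →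
    Disjoint ((⇑T)^[i] '' E j) ((⇑T)^[i'] '' E j)
  /-- (ii) the base is cut into three pieces of equal measure. -/
  E_union : ∀ j, 1 ≤ j → E j = E1 j ∪ E2 j ∪ E3 j
  E_disj12 : ∀ j, 1 ≤ j → Disjoint (E1 j) (E2 j)
  E_disj13 : ∀ j, 1 ≤ j → Disjoint (E1 j) (E3 j)
  E_disj23 : ∀ j, 1 ≤ j → Disjoint (E2 j) (E3 j)
  E_meas12 : ∀ j, 1 ≤ j → μ (E1 j) = μ (E2 j)
  E_meas23 : ∀ j, 1 ≤ j → μ (E2 j) = μ (E3 j)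
  E_next : ∀ j, 1 ≤ j → E (j + 1) = E1 j
  /-- (iii) stacking: the top of the first column is sent to the base of the second. -/
  stack1 : ∀ j, 1 ≤ j → μ (((⇑T)^[h j + 1] '' E1 j) ∆ E2 j) = 0
  /-- (iii) stacking: the top spacer over the second column is sent to the third base. -/
  stack2 : ∀ j, 1 ≤ j → μ (((⇑T)^[h j + 1 + s j] '' E2 j) ∆ E3 j) = 0
  /-- (iii) the spacer levels are disjoint from the `j`-th tower. -/
  spacer_disjoint : ∀ j, 1 ≤ j → ∀ i, 1 ≤ i → i ≤ s j → ∀ i' ≤ h j,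
    Disjoint ((⇑T)^[h j + i] '' E2 j) ((⇑T)^[i'] '' E j)
  /-- (iv) the towers fill up the whole space. -/
  tower_full : Tendsto (fun j => μ (⋃ i ∈ Finset.range (h j + 1), (⇑T)^[i] '' E j))
    atTop (𝓝 1)
  /-- (iv) the levels of the towers generate the full σ-algebra mod `μ`. -/
  generates : ∀ A : Set X, MeasurableSet A → ∃ B : Set X,
    MeasurableSet[MeasurableSpace.generateFrom
      {S : Set X | ∃ j, 1 ≤ j ∧ ∃ i ≤ h j, S = (⇑T)^[i] '' E j}] B ∧ μ (A ∆ B) = 0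

open Set
open scoped ENNReal

namespace PCProof

variable {X : Type*} [MeasurableSpace X]

def itE (T : X ≃ᵐ X) : ℕ → (X ≃ᵐ X)
  | 0 => MeasurableEquiv.refl X
  | (i+1) => (itE T i).trans T

lemma coe_itE (T : X ≃ᵐ X) : ∀ i, ⇑(itE T i) = (⇑T)^[i]
  | 0 => rfl
  | (i+1) => by
      funext x
      simp [itE, MeasurableEquiv.coe_trans, coe_itE T i,
        Function.iterate_succ_apply' (⇑T) i x]

lemma mp_itE {μ : Measure X} (T : X ≃ᵐ X) (hT : MeasurePreserving T μ μ) :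
    ∀ i, MeasurePreserving (itE T i) μ μ
  | 0 => MeasurePreserving.id μ
  | (i+1) => (mp_itE T hT i).trans hT

lemma iter_measure_preimage {μ : Measure X} {T : X ≃ᵐ X} (hT : MeasurePreserving T μ μ)
    (i : ℕ) (S : Set X) : μ ((⇑T)^[i] ⁻¹' S) = μ S := by
  rw [← coe_itE]
  exact (mp_itE T hT i).measure_preimage_equiv S

lemma iter_image_eq_preimage (T : X ≃ᵐ X) (i : ℕ) (S : Set X) :
    (⇑T)^[i] '' S = (⇑T.symm)^[i] ⁻¹' S :=
  congrFun (Set.image_eq_preimage_of_inverse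
    (Function.LeftInverse.iterate T.symm_apply_apply i)
    (Function.RightInverse.iterate T.apply_symm_apply i)) S

lemma iter_measure_image {μ : Measure X} {T : X ≃ᵐ X} (hT : MeasurePreserving T μ μ)
    (i : ℕ) (S : Set X) : μ ((⇑T)^[i] '' S) = μ S := by
  rw [iter_image_eq_preimage]
  exact iter_measure_preimage (MeasurePreserving.symm T hT) i S

lemma iter_measurableSet {T : X ≃ᵐ X} (i : ℕ) {S : Set X} (hS : MeasurableSet S) :
    MeasurableSet ((⇑T)^[i] '' S) := by
  rw [iter_image_eq_preimage, ← coe_itE]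
  exact (itE T.symm i).measurable hS

lemma iter_injective (T : X ≃ᵐ X) (i : ℕ) : Function.Injective ((⇑T)^[i]) :=
  T.injective.iterate i

lemma iter_iter_image (T : X ≃ᵐ X) (a b : ℕ) (S : Set X) :
    (⇑T)^[a] '' ((⇑T)^[b] '' S) = (⇑T)^[a + b] '' S := by
  rw [Function.iterate_add (⇑T) a b, Set.image_comp]

lemma sd_comm_null {μ : Measure X} {S R : Set X} (h : μ (S ∆ R) = 0) : μ (R ∆ S) = 0 := by
  rwa [symmDiff_comm]

section Chacon

variable {μ : Measure X} {s : ℕ → ℕ} (C : ChaconMap μ s)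

/-- Level `i` of tower `j`. -/
def Lv (j i : ℕ) : Set X := (⇑C.T)^[i] '' C.E j

lemma measLv (j i : ℕ) : MeasurableSet (Lv C j i) :=
  iter_measurableSet i (C.measE j)

lemma measure_Lv (j i : ℕ) : μ (Lv C j i) = μ (C.E j) :=
  iter_measure_image C.measurePreserving i _

lemma Lv_add (j k i : ℕ) : Lv C j (k + i) = (⇑C.T)^[k] '' Lv C j i := by
  unfold Lv
  rw [Function.iterate_add (⇑C.T) k i, Set.image_comp]

/-- transport of null symmetric differences by iterates -/
lemma sd_image_null {S R : Set X} (k : ℕ) (hSR : μ (S ∆ R) = 0) :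
    μ (((⇑C.T)^[k] '' S) ∆ ((⇑C.T)^[k] '' R)) = 0 := by
  rw [← Set.image_symmDiff (iter_injective C.T k)]
  rw [iter_measure_image C.measurePreserving]
  exact hSR

lemma inter_meas_congr {S R : Set X} (hSR : μ (S ∆ R) = 0) (W : Set X) :
    μ (W ∩ S) = μ (W ∩ R) :=
  measure_congr (Filter.EventuallyEq.inter (ae_eq_refl W)
    (measure_symmDiff_eq_zero_iff.mp hSR))

lemma piece2 {j : ℕ} (hj : 1 ≤ j) (i : ℕ) :
    μ (((⇑C.T)^[i] '' C.E2 j) ∆ Lv C (j+1) (i + (C.h j + 1))) = 0 := by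
  have h1 : Lv C (j+1) (i + (C.h j + 1)) = (⇑C.T)^[i] '' ((⇑C.T)^[C.h j + 1] '' C.E1 j) := by
    unfold Lv
    rw [C.E_next j hj, iter_iter_image]
  rw [h1]
  exact sd_comm_null (sd_image_null C i (C.stack1 j hj))

lemma piece3 {j : ℕ} (hj : 1 ≤ j) (i : ℕ) :
    μ (((⇑C.T)^[i] '' C.E3 j) ∆ Lv C (j+1) (i + (2*C.h j + 2 + s j))) = 0 := by
  have hb : 2*C.h j + 2 + s j = (C.h j + 1 + s j) + (C.h j + 1) := by ring
  have h1 : Lv C (j+1) (i + (2*C.h j + 2 + s j))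
      = (⇑C.T)^[i] '' ((⇑C.T)^[C.h j + 1 + s j] '' ((⇑C.T)^[C.h j + 1] '' C.E1 j)) := by
    unfold Lv
    rw [C.E_next j hj, iter_iter_image, iter_iter_image,
      show i + (C.h j + 1 + s j) + (C.h j + 1) = i + (2*C.h j + 2 + s j) by ring]
  rw [h1]
  have k1 : μ (((⇑C.T)^[C.h j + 1 + s j] '' ((⇑C.T)^[C.h j + 1] '' C.E1 j))
      ∆ ((⇑C.T)^[C.h j + 1 + s j] '' C.E2 j)) = 0 :=
    sd_image_null C _ (C.stack1 j hj)
  have k2 : μ (((⇑C.T)^[C.h j + 1 + s j] '' ((⇑C.T)^[C.h j + 1] '' C.E1 j)) ∆ C.E3 j) = 0 := by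
    refine le_antisymm (le_trans (measure_symmDiff_le _ ((⇑C.T)^[C.h j + 1 + s j] '' C.E2 j) _)
      ?_) zero_le
    rw [k1, C.stack2 j hj, add_zero]
  exact sd_comm_null (sd_image_null C i k2)

/-- mass of `W` in level `i` of tower `j` -/
def dd (W : Set X) (j i : ℕ) : ℝ≥0∞ := μ (W ∩ Lv C j i)

lemma dd_le (W : Set X) (j i : ℕ) : dd C W j i ≤ μ (C.E j) := by
  rw [← measure_Lv C j i]
  exact measure_mono inter_subset_right

lemma dd_add_compl {W : Set X} (hW : MeasurableSet W) (j i : ℕ) :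
    dd C W j i + dd C Wᶜ j i = μ (C.E j) := by
  unfold dd
  rw [Set.inter_comm W, Set.inter_comm Wᶜ, ← Set.diff_eq,
    measure_inter_add_diff _ hW, measure_Lv]

/-- decomposition of level masses into the next tower -/
lemma dd_decomp {j : ℕ} (hj : 1 ≤ j) {W : Set X} (hW : MeasurableSet W) (i : ℕ) :
    dd C W j i = dd C W (j+1) i + dd C W (j+1) (i + (C.h j + 1))
      + dd C W (j+1) (i + (2*C.h j + 2 + s j)) := by
  have hEsplit : Lv C j i = ((⇑C.T)^[i] '' C.E1 j) ∪ ((⇑C.T)^[i] '' C.E2 j)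
      ∪ ((⇑C.T)^[i] '' C.E3 j) := by
    unfold Lv
    rw [C.E_union j hj, Set.image_union, Set.image_union]
  have hinj := iter_injective C.T i
  have d12 : Disjoint ((⇑C.T)^[i] '' C.E1 j) ((⇑C.T)^[i] '' C.E2 j) :=
    (Set.disjoint_image_iff hinj).mpr (C.E_disj12 j hj)
  have d13 : Disjoint ((⇑C.T)^[i] '' C.E1 j) ((⇑C.T)^[i] '' C.E3 j) :=
    (Set.disjoint_image_iff hinj).mpr (C.E_disj13 j hj)
  have d23 : Disjoint ((⇑C.T)^[i] '' C.E2 j) ((⇑C.T)^[i] '' C.E3 j) :=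
    (Set.disjoint_image_iff hinj).mpr (C.E_disj23 j hj)
  have m2 : MeasurableSet ((⇑C.T)^[i] '' C.E2 j) := iter_measurableSet i (C.measE2 j)
  have m3 : MeasurableSet ((⇑C.T)^[i] '' C.E3 j) := iter_measurableSet i (C.measE3 j)
  have step : μ (W ∩ Lv C j i) = μ (W ∩ ((⇑C.T)^[i] '' C.E1 j))
      + μ (W ∩ ((⇑C.T)^[i] '' C.E2 j)) + μ (W ∩ ((⇑C.T)^[i] '' C.E3 j)) := by
    rw [hEsplit, Set.inter_union_distrib_left, Set.inter_union_distrib_left,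
      measure_union ((d13.mono Set.inter_subset_right Set.inter_subset_right).union_left
        (d23.mono Set.inter_subset_right Set.inter_subset_right)) (hW.inter m3),
      measure_union (d12.mono Set.inter_subset_right Set.inter_subset_right) (hW.inter m2)]
  have r1 : μ (W ∩ ((⇑C.T)^[i] '' C.E1 j)) = dd C W (j+1) i := by
    unfold dd Lv
    rw [C.E_next j hj]
  have r2 : μ (W ∩ ((⇑C.T)^[i] '' C.E2 j)) = dd C W (j+1) (i + (C.h j + 1)) :=
    inter_meas_congr (piece2 C hj i) W
  have r3 : μ (W ∩ ((⇑C.T)^[i] '' C.E3 j)) = dd C W (j+1) (i + (2*C.h j + 2 + s j)) :=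
    inter_meas_congr (piece3 C hj i) W
  unfold dd
  rw [step, r1, r2, r3]
  rfl

/-- shift invariance of masses of a strictly `T^[n]`-invariant set -/
lemma dd_shift {n : ℕ} {W : Set X} (hW : (⇑C.T)^[n] ⁻¹' W = W) (j i : ℕ) :
    dd C W j (i + n) = dd C W j i := by
  unfold dd
  have h1 : Lv C j (i + n) = (⇑C.T)^[n] '' Lv C j i := by
    rw [Nat.add_comm, Lv_add]
  have h2 : (⇑C.T)^[n] '' W = W := by
    conv_lhs => rw [← hW]
    exact Set.image_preimage_eq W (C.T.surjective.iterate n)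
  rw [h1]
  conv_lhs => rw [← h2]
  rw [← Set.image_inter (iter_injective C.T n), iter_measure_image C.measurePreserving]

lemma dd_add_mul {n : ℕ} {W : Set X} (hW : (⇑C.T)^[n] ⁻¹' W = W) (j i k : ℕ) :
    dd C W j (i + k * n) = dd C W j i := by
  induction k with
  | zero => simp
  | succ k ih =>
      rw [show i + (k+1)*n = (i + k*n) + n by ring, dd_shift C hW, ih]

lemma dd_mod {n : ℕ} {W : Set X} (hW : (⇑C.T)^[n] ⁻¹' W = W) (j i : ℕ) :
    dd C W j i = dd C W j (i % n) := by
  conv_lhs => rw [← Nat.mod_add_div' i n]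
  exact dd_add_mul C hW j (i % n) (i / n)

/-- mass of `W` on levels of residue class `r` mod `n` in tower `j` -/
def DW (W : Set X) (n : ℕ) (j : ℕ) (r : ZMod n) : ℝ≥0∞ := dd C W j r.val

lemma dd_eq_DW {n : ℕ} [NeZero n] {W : Set X} (hW : (⇑C.T)^[n] ⁻¹' W = W) (j i : ℕ) :
    dd C W j i = DW C W n j (i : ZMod n) := by
  rw [dd_mod C hW j i]
  unfold DW
  rw [ZMod.val_natCast]

lemma DW_def {n : ℕ} (W : Set X) (j : ℕ) (r : ZMod n) :
    DW C W n j r = dd C W j r.val := rfl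

lemma DW_le {n : ℕ} (W : Set X) (j : ℕ) (r : ZMod n) : DW C W n j r ≤ μ (C.E j) :=
  dd_le C W j r.val

lemma DW_add_compl {n : ℕ} {W : Set X} (hW : MeasurableSet W) (j : ℕ) (r : ZMod n) :
    DW C W n j r + DW C Wᶜ n j r = μ (C.E j) :=
  dd_add_compl C hW j r.val

lemma DW_decomp {n : ℕ} [NeZero n] {j : ℕ} (hj : 1 ≤ j) {W : Set X} (hWm : MeasurableSet W)
    (hW : (⇑C.T)^[n] ⁻¹' W = W) (r : ZMod n) :
    DW C W n j r = DW C W n (j+1) r + DW C W n (j+1) (r + ((C.h j + 1 : ℕ) : ZMod n))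
      + DW C W n (j+1) (r + ((2*C.h j + 2 + s j : ℕ) : ZMod n)) := by
  have hr : ((r.val : ℕ) : ZMod n) = r := ZMod.natCast_rightInverse r
  have h2 : ((r.val + (C.h j + 1) : ℕ) : ZMod n) = r + ((C.h j + 1 : ℕ) : ZMod n) := by
    rw [Nat.cast_add, hr]
  have h3 : ((r.val + (2*C.h j + 2 + s j) : ℕ) : ZMod n)
      = r + ((2*C.h j + 2 + s j : ℕ) : ZMod n) := by
    rw [Nat.cast_add, hr]
  have hd := dd_decomp C hj hWm r.val
  rw [dd_eq_DW C hW (j+1) (r.val + (C.h j + 1)),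
    dd_eq_DW C hW (j+1) (r.val + (2*C.h j + 2 + s j)),
    dd_eq_DW C hW (j+1) r.val, h2, h3, hr] at hd
  exact hd

section Prob
variable [IsProbabilityMeasure μ]

lemma e_succ {j : ℕ} (hj : 1 ≤ j) : μ (C.E j) = 3 * μ (C.E (j+1)) := by
  rw [C.E_next j hj]
  conv_lhs => rw [C.E_union j hj]
  rw [measure_union ((C.E_disj13 j hj).union_left (C.E_disj23 j hj)) (C.measE3 j),
    measure_union (C.E_disj12 j hj) (C.measE2 j), ← C.E_meas12 j hj,
    ← C.E_meas23 j hj, ← C.E_meas12 j hj]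
  ring

lemma e_antitone {j k : ℕ} (hj : 1 ≤ j) : μ (C.E (j + k)) ≤ μ (C.E j) := by
  induction k with
  | zero => simp
  | succ k ih =>
      refine le_trans ?_ ih
      rw [show j + (k+1) = (j+k) + 1 by ring]
      calc μ (C.E (j + k + 1)) = 1 * μ (C.E (j + k + 1)) := (one_mul _).symm
        _ ≤ 3 * μ (C.E (j + k + 1)) := by gcongr <;> norm_num
        _ = μ (C.E (j + k)) := (e_succ C (le_trans hj (Nat.le_add_right j k))).symm

lemma e_pow (k : ℕ) : μ (C.E (1 + k)) ≤ 3⁻¹ ^ k := by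
  induction k with
  | zero => simpa using prob_le_one
  | succ k ih =>
      have h3 : (3:ℝ≥0∞) * μ (C.E (1 + k + 1)) = μ (C.E (1 + k)) :=
        (e_succ C (Nat.le_add_right 1 k)).symm
      have : μ (C.E (1 + (k+1))) = 3⁻¹ * μ (C.E (1 + k)) := by
        rw [← h3, ← mul_assoc, ENNReal.inv_mul_cancel (by norm_num) (by norm_num), one_mul,
          show 1 + (k+1) = 1 + k + 1 by ring]
      rw [this, pow_succ, mul_comm ((3:ℝ≥0∞)⁻¹ ^ k) 3⁻¹]
      exact mul_le_mul_right ih _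

lemma e_small (η : ℝ≥0∞) (hη : 0 < η) : ∃ J, ∀ j ≥ J, μ (C.E j) ≤ η := by
  have hlim : Tendsto (fun k : ℕ => (3:ℝ≥0∞)⁻¹ ^ k) atTop (𝓝 0) :=
    ENNReal.tendsto_pow_atTop_nhds_zero_of_lt_one
      (by rw [ENNReal.inv_lt_one]; norm_num)
  have hev : ∀ᶠ k in atTop, (3:ℝ≥0∞)⁻¹ ^ k ∈ Set.Iio η := hlim (Iio_mem_nhds hη)
  obtain ⟨k, hk⟩ := hev.exists
  refine ⟨1 + k, fun j hj => ?_⟩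
  have h1 : μ (C.E j) ≤ μ (C.E (1 + k)) := by
    have hjj : j = (1 + k) + (j - (1 + k)) := by omega
    rw [hjj]
    exact e_antitone C (by omega)
  exact le_trans h1 (le_trans (e_pow C k) (le_of_lt hk))

/-- the tower as a set -/
def Tw (j : ℕ) : Set X := ⋃ i ∈ Finset.range (C.h j + 1), (⇑C.T)^[i] '' C.E j

lemma Tw_eq (j : ℕ) : Tw C j = ⋃ i ∈ Finset.range (C.h j + 1), Lv C j i := rfl

lemma measTw (j : ℕ) : MeasurableSet (Tw C j) :=
  MeasurableSet.biUnion (Finset.range (C.h j + 1)).countable_toSet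
    (fun i _ => iter_measurableSet i (C.measE j))

lemma measure_Tw {j : ℕ} (hj : 1 ≤ j) :
    μ (Tw C j) = (C.h j + 1) * μ (C.E j) := by
  rw [Tw_eq, measure_biUnion_finset ?hd (fun i _ => measLv C j i)]
  · rw [Finset.sum_congr rfl (fun i _ => measure_Lv C j i), Finset.sum_const,
      Finset.card_range, nsmul_eq_mul]
    push_cast
    ring
  case hd =>
    intro i hi i' hi' hne
    exact C.tower_disjoint j hj i (Nat.lt_succ_iff.mp (Finset.mem_range.mp hi))
      i' (Nat.lt_succ_iff.mp (Finset.mem_range.mp hi')) hne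

lemma tw_compl_small (η : ℝ≥0∞) (hη : 0 < η) : ∃ J, ∀ j ≥ J, μ ((Tw C j)ᶜ) ≤ η := by
  rcases le_or_gt 1 η with h1 | h1
  · exact ⟨0, fun j _ => le_trans prob_le_one h1⟩
  · have hc : (1:ℝ≥0∞) - η < 1 := ENNReal.sub_lt_self ENNReal.one_ne_top one_ne_zero hη.ne'
    have hev : ∀ᶠ j in atTop, μ (Tw C j) ∈ Set.Ioi ((1:ℝ≥0∞) - η) :=
      C.tower_full (Ioi_mem_nhds hc)
    obtain ⟨J, hJ⟩ := eventually_atTop.mp hev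
    refine ⟨J, fun j hj => ?_⟩
    by_contra hlt
    push_neg at hlt
    have hsum : μ (Tw C j) + μ ((Tw C j)ᶜ) = 1 := by
      rw [measure_add_measure_compl (measTw C j), measure_univ]
    have : (1:ℝ≥0∞) - η + η < μ (Tw C j) + μ ((Tw C j)ᶜ) :=
      ENNReal.add_lt_add (hJ j hj) hlt
    rw [hsum, tsub_add_cancel_of_le h1.le] at this
    exact lt_irrefl _ this

/-! ### Approximation by unions of levels -/

end Prob
end Chacon

lemma sd_union_subset (S1 S2 R1 R2 : Set X) :
    (S1 ∪ S2) ∆ (R1 ∪ R2) ⊆ (S1 ∆ R1) ∪ (S2 ∆ R2) := by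
  intro x hx
  rw [Set.mem_symmDiff] at hx
  simp only [Set.mem_union, Set.mem_symmDiff]
  rcases hx with ⟨hx1, hx2⟩ | ⟨hx1, hx2⟩
  · rw [Set.mem_union] at hx2
    push_neg at hx2
    rcases hx1 with h | h
    · exact Or.inl (Or.inl ⟨h, hx2.1⟩)
    · exact Or.inr (Or.inl ⟨h, hx2.2⟩)
  · rw [Set.mem_union] at hx2
    push_neg at hx2
    rcases hx1 with h | h
    · exact Or.inl (Or.inr ⟨h, hx2.1⟩)
    · exact Or.inr (Or.inr ⟨h, hx2.2⟩)

lemma sd_biUnion_subset {ι : Type*} (F : Finset ι) (f g : ι → Set X) :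
    (⋃ i ∈ F, f i) ∆ (⋃ i ∈ F, g i) ⊆ ⋃ i ∈ F, (f i ∆ g i) := by
  intro x hx
  rw [Set.mem_symmDiff] at hx
  simp only [Set.mem_iUnion, exists_prop] at hx ⊢
  rcases hx with ⟨⟨i, hi, hxi⟩, hx2⟩ | ⟨⟨i, hi, hxi⟩, hx2⟩
  · push_neg at hx2
    exact ⟨i, hi, Set.mem_symmDiff.mpr (Or.inl ⟨hxi, hx2 i hi⟩)⟩
  · push_neg at hx2
    exact ⟨i, hi, Set.mem_symmDiff.mpr (Or.inr ⟨hxi, hx2 i hi⟩)⟩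

section Chacon2

variable {μ : Measure X} {s : ℕ → ℕ} (C : ChaconMap μ s)

/-- union of the levels indexed by `S` of tower `j` -/
def UF (j : ℕ) (S : Finset ℕ) : Set X := ⋃ i ∈ S, Lv C j i

lemma measUF (j : ℕ) (S : Finset ℕ) : MeasurableSet (UF C j S) :=
  MeasurableSet.biUnion S.countable_toSet (fun i _ => measLv C j i)

lemma lv_tri_null {j : ℕ} (hj : 1 ≤ j) (i : ℕ) :
    μ ((Lv C j i) ∆ (Lv C (j+1) i ∪ Lv C (j+1) (i + (C.h j + 1))
      ∪ Lv C (j+1) (i + (2*C.h j + 2 + s j)))) = 0 := by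
  have hsplit : Lv C j i = ((⇑C.T)^[i] '' C.E1 j) ∪ ((⇑C.T)^[i] '' C.E2 j)
      ∪ ((⇑C.T)^[i] '' C.E3 j) := by
    unfold Lv
    rw [C.E_union j hj, Set.image_union, Set.image_union]
  have h1 : Lv C (j+1) i = (⇑C.T)^[i] '' C.E1 j := by
    unfold Lv; rw [C.E_next j hj]
  rw [hsplit]
  refine measure_mono_null (subset_trans (sd_union_subset _ _ _ _)
    (Set.union_subset_union_left _ (sd_union_subset _ _ _ _))) ?_
  refine measure_union_null (measure_union_null ?_ (piece2 C hj i)) (piece3 C hj i)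
  rw [h1, symmDiff_self]
  simp

lemma UF_push {j : ℕ} (hj : 1 ≤ j) (S : Finset ℕ) (hS : ∀ i ∈ S, i ≤ C.h j) :
    ∃ S' : Finset ℕ, (∀ i ∈ S', i ≤ C.h (j+1)) ∧ μ ((UF C j S) ∆ (UF C (j+1) S')) = 0 := by
  classical
  set a := C.h j + 1 with ha
  set b := 2*C.h j + 2 + s j with hb
  refine ⟨S ∪ S.image (· + a) ∪ S.image (· + b), ?_, ?_⟩
  · intro i hi
    have hh := C.h_succ j hj
    simp only [Finset.mem_union, Finset.mem_image] at hi
    rcases hi with (hi | ⟨i₀, hi₀, rfl⟩) | ⟨i₀, hi₀, rfl⟩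
    · have := hS i hi; omega
    · have := hS i₀ hi₀; omega
    · have := hS i₀ hi₀; omega
  · have hre : UF C (j+1) (S ∪ S.image (· + a) ∪ S.image (· + b))
        = ⋃ i ∈ S, (Lv C (j+1) i ∪ Lv C (j+1) (i + a) ∪ Lv C (j+1) (i + b)) := by
      unfold UF
      ext x
      simp only [Set.mem_iUnion, Finset.mem_union, Finset.mem_image, exists_prop,
        Set.mem_union]
      constructor
      · rintro ⟨i, (hi | ⟨i₀, hi₀, rfl⟩) | ⟨i₀, hi₀, rfl⟩, hx⟩
        · exact ⟨i, hi, Or.inl (Or.inl hx)⟩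
        · exact ⟨i₀, hi₀, Or.inl (Or.inr hx)⟩
        · exact ⟨i₀, hi₀, Or.inr hx⟩
      · rintro ⟨i, hi, (hx | hx) | hx⟩
        · exact ⟨i, Or.inl (Or.inl hi), hx⟩
        · exact ⟨i + a, Or.inl (Or.inr ⟨i, hi, rfl⟩), hx⟩
        · exact ⟨i + b, Or.inr ⟨i, hi, rfl⟩, hx⟩
    rw [hre]
    refine measure_mono_null (sd_biUnion_subset S _ _) ?_
    exact (measure_biUnion_null_iff S.countable_toSet).mpr (fun i _ => lv_tri_null C hj i)

section Prob2
variable [IsProbabilityMeasure μ]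

/-- `B` is approximable by unions of levels of all high towers -/
def Approx (B : Set X) : Prop :=
  ∀ ε : ℝ≥0∞, 0 < ε → ∃ J, 1 ≤ J ∧ ∀ j, J ≤ j →
    ∃ S : Finset ℕ, (∀ i ∈ S, i ≤ C.h j) ∧ μ (B ∆ UF C j S) ≤ ε

lemma approx_level {j₀ i : ℕ} (hj₀ : 1 ≤ j₀) (hi : i ≤ C.h j₀) : Approx C (Lv C j₀ i) := by
  intro ε hε
  refine ⟨j₀, hj₀, ?_⟩
  have key : ∀ j, j₀ ≤ j → ∃ S : Finset ℕ, (∀ i' ∈ S, i' ≤ C.h j)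
      ∧ μ ((Lv C j₀ i) ∆ UF C j S) = 0 := by
    intro j hj
    induction j, hj using Nat.le_induction with
    | base =>
        refine ⟨{i}, by simpa using hi, ?_⟩
        have : UF C j₀ {i} = Lv C j₀ i := by simp [UF]
        rw [this, symmDiff_self]
        simp
    | succ j hj ih =>
        obtain ⟨S, hSb, hS0⟩ := ih
        obtain ⟨S', hS'b, hS'0⟩ := UF_push C (le_trans hj₀ hj) S hSb
        refine ⟨S', hS'b, le_antisymm (le_trans (measure_symmDiff_le _ (UF C j S) _) ?_)
          zero_le⟩
        rw [hS0, hS'0, add_zero]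
  intro j hj
  obtain ⟨S, hSb, hS0⟩ := key j hj
  exact ⟨S, hSb, by rw [hS0]; exact zero_le⟩

lemma approx_compl {B : Set X} (hB : Approx C B) : Approx C Bᶜ := by
  intro ε hε
  have hε2 : 0 < ε / 2 := ENNReal.half_pos hε.ne'
  obtain ⟨J₁, hJ₁1, hJ₁⟩ := hB (ε/2) hε2
  obtain ⟨J₂, hJ₂⟩ := tw_compl_small C (ε/2) hε2
  refine ⟨max J₁ J₂, le_trans hJ₁1 (le_max_left _ _), fun j hj => ?_⟩
  have hjJ₁ : J₁ ≤ j := le_trans (le_max_left _ _) hj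
  have hjJ₂ : J₂ ≤ j := le_trans (le_max_right _ _) hj
  obtain ⟨S, hSb, hBU⟩ := hJ₁ j hjJ₁
  have hj1 : 1 ≤ j := le_trans hJ₁1 hjJ₁
  classical
  refine ⟨Finset.range (C.h j + 1) \ S, fun i hi => by
    simp only [Finset.mem_sdiff, Finset.mem_range] at hi; omega, ?_⟩
  set U := UF C j S with hU
  have hTwU : Tw C j \ U = UF C j (Finset.range (C.h j + 1) \ S) := by
    ext x
    simp only [Set.mem_diff, Tw_eq, UF, Set.mem_iUnion, exists_prop, Finset.mem_sdiff,
      Finset.mem_range]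
    constructor
    · rintro ⟨⟨i, hi, hxi⟩, hxU⟩
      exact ⟨i, ⟨hi, fun hiS => hxU (Set.mem_biUnion hiS hxi)⟩, hxi⟩
    · rintro ⟨i, ⟨hi, hiS⟩, hxi⟩
      refine ⟨⟨i, hi, hxi⟩, ?_⟩
      intro hxU'
      rw [hU] at hxU'
      unfold UF at hxU'
      obtain ⟨i', hi'S, hxi'⟩ := Set.mem_iUnion₂.mp hxU'
      have hi' : i' ≤ C.h j := hSb i' hi'S
      have hne : i ≠ i' := fun hii => hiS (hii ▸ hi'S)
      exact Set.disjoint_left.mp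
        (C.tower_disjoint j hj1 i (by omega) i' hi' hne) hxi hxi'
  rw [← hTwU]
  have hsub : Bᶜ ∆ (Tw C j \ U) ⊆ (B ∆ U) ∪ (Tw C j)ᶜ := by
    refine subset_trans (symmDiff_triangle _ Uᶜ _) ?_
    rw [compl_symmDiff_compl]
    refine Set.union_subset_union_right _ ?_
    intro x hx
    rw [Set.mem_symmDiff] at hx
    rcases hx with ⟨hx1, hx2⟩ | ⟨hx1, hx2⟩
    · intro hxT
      exact hx2 ⟨hxT, hx1⟩
    · exact absurd hx1.2 (by simpa using hx2)
  calc μ (Bᶜ ∆ (Tw C j \ U)) ≤ μ ((B ∆ U) ∪ (Tw C j)ᶜ) := measure_mono hsub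
    _ ≤ μ (B ∆ U) + μ ((Tw C j)ᶜ) := measure_union_le _ _
    _ ≤ ε/2 + ε/2 := add_le_add hBU (hJ₂ j hjJ₂)
    _ = ε := ENNReal.add_halves ε

lemma approx_iUnion (f : ℕ → Set X) (hm : ∀ k, MeasurableSet (f k))
    (hf : ∀ k, Approx C (f k)) : Approx C (⋃ k, f k) := by
  classical
  intro ε hε
  have hε2 : 0 < ε / 2 := ENNReal.half_pos hε.ne'
  set B := ⋃ k, f k with hB
  set P : ℕ → Set X := fun K => ⋃ k ∈ Finset.range K, f k with hP
  have hPm : ∀ K, MeasurableSet (P K) :=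
    fun K => MeasurableSet.biUnion (Finset.range K).countable_toSet (fun k _ => hm k)
  have hD0 : ∃ K₀, μ (B \ P K₀) ≤ ε/2 := by
    have hBm : MeasurableSet B := MeasurableSet.iUnion hm
    have hmono : Antitone (fun K => B \ P K) := by
      intro K K' hKK'
      refine Set.diff_subset_diff_right (Set.iUnion₂_subset fun k hk => ?_)
      exact Set.subset_iUnion₂ (s := fun k (_ : k ∈ Finset.range K') => f k) k
        (Finset.mem_range.mpr (lt_of_lt_of_le (Finset.mem_range.mp hk) hKK'))
    have hiInter : (⋂ K, B \ P K) = ∅ := by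
      refine Set.eq_empty_iff_forall_notMem.mpr (fun x hx => ?_)
      rw [Set.mem_iInter] at hx
      obtain ⟨hxB, _⟩ := hx 0
      obtain ⟨k, hxk⟩ := Set.mem_iUnion.mp hxB
      exact (hx (k+1)).2 (Set.mem_iUnion₂.mpr ⟨k, Finset.self_mem_range_succ k, hxk⟩)
    have htend : Tendsto (fun K => μ (B \ P K)) atTop (𝓝 (μ (⋂ K, B \ P K))) :=
      tendsto_measure_iInter_atTop
        (fun K => ((hBm.diff (hPm K)).nullMeasurableSet)) hmono
        ⟨0, (lt_of_le_of_lt (measure_mono (Set.diff_subset)) (lt_of_le_of_lt prob_le_one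
          ENNReal.one_lt_top)).ne⟩
    rw [hiInter, measure_empty] at htend
    obtain ⟨K₀, hK₀⟩ := (htend.eventually (gt_mem_nhds hε2)).exists
    exact ⟨K₀, hK₀.le⟩
  obtain ⟨K₀, hK₀⟩ := hD0
  -- budget per piece
  have hbpos : 0 < ε / 2 / (K₀ : ℝ≥0∞) := by
    refine ENNReal.div_pos hε2.ne' (by simp)
  choose Jk hJk1 hJk using fun k : ℕ => hf k (ε / 2 / (K₀ : ℝ≥0∞)) hbpos
  refine ⟨max 1 ((Finset.range K₀).sup Jk), le_max_left _ _, fun j hj => ?_⟩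
  have hget : ∀ k ∈ Finset.range K₀, ∃ S : Finset ℕ, (∀ i ∈ S, i ≤ C.h j)
      ∧ μ (f k ∆ UF C j S) ≤ ε / 2 / (K₀ : ℝ≥0∞) := by
    intro k hk
    exact hJk k j (le_trans (le_trans (Finset.le_sup hk) (le_max_right _ _)) hj)
  choose! Sk hSkb hSke using hget
  refine ⟨(Finset.range K₀).biUnion Sk, ?_, ?_⟩
  · intro i hi
    simp only [Finset.mem_biUnion] at hi
    obtain ⟨k, hk, hik⟩ := hi
    exact hSkb k hk i hik
  · have hre : UF C j ((Finset.range K₀).biUnion Sk)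
        = ⋃ k ∈ Finset.range K₀, UF C j (Sk k) := by
      unfold UF
      ext x
      simp only [Set.mem_iUnion, Finset.mem_biUnion, exists_prop]
      constructor
      · rintro ⟨i, ⟨k, hk, hik⟩, hx⟩
        exact ⟨k, hk, i, hik, hx⟩
      · rintro ⟨k, hk, i, hik, hx⟩
        exact ⟨i, ⟨k, hk, hik⟩, hx⟩
    have hstep1 : μ (B ∆ P K₀) ≤ ε/2 := by
      have : B ∆ P K₀ = B \ P K₀ := by
        refine symmDiff_of_ge ?_
        intro x hx
        simp only [hP, Set.mem_iUnion, exists_prop] at hx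
        obtain ⟨k, _, hxk⟩ := hx
        exact Set.mem_iUnion.mpr ⟨k, hxk⟩
      rw [this]
      exact hK₀
    have hstep2 : μ (P K₀ ∆ UF C j ((Finset.range K₀).biUnion Sk))
        ≤ ε/2 := by
      rw [hre]
      refine le_trans (measure_mono (sd_biUnion_subset _ _ _)) ?_
      refine le_trans (measure_biUnion_finset_le _ _) ?_
      calc (∑ k ∈ Finset.range K₀, μ (f k ∆ UF C j (Sk k)))
          ≤ ∑ k ∈ Finset.range K₀, ε / 2 / (K₀ : ℝ≥0∞) :=
            Finset.sum_le_sum (fun k hk => hSke k hk)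
        _ = (K₀ : ℝ≥0∞) * (ε / 2 / (K₀ : ℝ≥0∞)) := by
            rw [Finset.sum_const, Finset.card_range, nsmul_eq_mul]
        _ ≤ ε/2 := ENNReal.mul_div_le
    calc μ (B ∆ UF C j ((Finset.range K₀).biUnion Sk))
        ≤ μ (B ∆ P K₀) + μ (P K₀ ∆ UF C j ((Finset.range K₀).biUnion Sk)) :=
          measure_symmDiff_le _ _ _
      _ ≤ ε/2 + ε/2 := add_le_add hstep1 hstep2
      _ = ε := ENNReal.add_halves ε

lemma approx_empty : Approx C (∅ : Set X) := by
  intro ε hε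
  refine ⟨1, le_rfl, fun j hj => ⟨∅, by simp, ?_⟩⟩
  have : UF C j ∅ = ∅ := by simp [UF]
  rw [this, symmDiff_self]
  simp

lemma approx_null_congr {A B : Set X} (hAB : μ (A ∆ B) = 0) (hB : Approx C B) :
    Approx C A := by
  intro ε hε
  obtain ⟨J, hJ1, hJ⟩ := hB ε hε
  refine ⟨J, hJ1, fun j hj => ?_⟩
  obtain ⟨S, hSb, hS⟩ := hJ j hj
  refine ⟨S, hSb, ?_⟩
  calc μ (A ∆ UF C j S) ≤ μ (A ∆ B) + μ (B ∆ UF C j S) := measure_symmDiff_le _ _ _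
    _ ≤ 0 + ε := add_le_add hAB.le hS
    _ = ε := by rw [zero_add]

/-- the σ-algebra of approximable measurable sets -/
def apxAlg : MeasurableSpace X where
  MeasurableSet' := fun B => MeasurableSet B ∧ Approx C B
  measurableSet_empty := ⟨MeasurableSet.empty, approx_empty C⟩
  measurableSet_compl := fun B hB => ⟨hB.1.compl, approx_compl C hB.2⟩
  measurableSet_iUnion := fun f hf =>
    ⟨MeasurableSet.iUnion (fun k => (hf k).1),
      approx_iUnion C f (fun k => (hf k).1) (fun k => (hf k).2)⟩

theorem approx_of_measurable {A : Set X} (hA : MeasurableSet A) : Approx C A := by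
  obtain ⟨B, hBgen, hAB⟩ := C.generates A hA
  refine approx_null_congr C hAB ?_
  have hle : MeasurableSpace.generateFrom
      {S' : Set X | ∃ j, 1 ≤ j ∧ ∃ i ≤ C.h j, S' = (⇑C.T)^[i] '' C.E j} ≤ apxAlg C := by
    refine MeasurableSpace.generateFrom_le ?_
    rintro t ⟨j, hj, i, hi, rfl⟩
    exact ⟨measLv C j i, approx_level C hj hi⟩
  exact (hle _ hBgen).2

/-- if all residue masses of an invariant set are uniformly `≤ θ·μ(E j)`, then `μ W ≤ θ` -/
lemma mass_small {n : ℕ} [NeZero n] {W : Set X}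
    (hWinv : (⇑C.T)^[n] ⁻¹' W = W) {J : ℕ} (hJ1 : 1 ≤ J) {θ : ℝ≥0∞}
    (hb : ∀ j, J ≤ j → ∀ r : ZMod n, DW C W n j r ≤ θ * μ (C.E j)) : μ W ≤ θ := by
  have key : ∀ j, J ≤ j → μ W ≤ θ + μ ((Tw C j)ᶜ) := by
    intro j hj
    have hj1 : 1 ≤ j := le_trans hJ1 hj
    have hsplit : μ W = μ (W ∩ Tw C j) + μ (W \ Tw C j) :=
      (measure_inter_add_diff W (measTw C j)).symm
    have h1 : μ (W ∩ Tw C j) ≤ θ := by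
      have hW1 : W ∩ Tw C j = ⋃ i ∈ Finset.range (C.h j + 1), (W ∩ Lv C j i) := by
        rw [Tw_eq]
        exact Set.inter_iUnion₂ _ _
      rw [hW1]
      refine le_trans (measure_biUnion_finset_le _ _) ?_
      have hterm : ∀ i ∈ Finset.range (C.h j + 1), μ (W ∩ Lv C j i) ≤ θ * μ (C.E j) := by
        intro i _
        have : μ (W ∩ Lv C j i) = DW C W n j ((i : ZMod n)) := dd_eq_DW C hWinv j i
        rw [this]
        exact hb j hj _
      refine le_trans (Finset.sum_le_sum hterm) ?_
      rw [Finset.sum_const, Finset.card_range, nsmul_eq_mul]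
      calc ((C.h j + 1 : ℕ) : ℝ≥0∞) * (θ * μ (C.E j))
          = θ * (((C.h j : ℕ) + 1) * μ (C.E j)) := by push_cast; ring
        _ = θ * μ (Tw C j) := by rw [measure_Tw C hj1]
        _ ≤ θ * 1 := mul_le_mul_right prob_le_one θ
        _ = θ := mul_one θ
    have h2 : μ (W \ Tw C j) ≤ μ ((Tw C j)ᶜ) :=
      measure_mono (fun x hx => hx.2)
    rw [hsplit]
    exact add_le_add h1 h2
  refine ENNReal.le_of_forall_pos_le_add (fun η hη _ => ?_)
  obtain ⟨J', hJ'⟩ := tw_compl_small C η (by exact_mod_cast hη)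
  refine le_trans (key (max J J') (le_max_left _ _)) ?_
  exact add_le_add_right (hJ' _ (le_max_right _ _)) θ

lemma key_dichotomy {n : ℕ} [NeZero n]
    {A : Set X} (hA : MeasurableSet A) (hinv : (⇑C.T)^[n] ⁻¹' A = A)
    (hcop : ∀ J : ℕ, ∃ j, J ≤ j ∧ Nat.Coprime (s j) n)
    (δ : ℝ≥0∞) (hδ : 0 < δ) : μ A ≤ δ ∨ μ Aᶜ ≤ δ := by
  classical
  have hn0 : n ≠ 0 := NeZero.ne n
  have hnpos : 0 < n := Nat.pos_of_ne_zero hn0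
  have hinvc : (⇑C.T)^[n] ⁻¹' Aᶜ = Aᶜ := by rw [Set.preimage_compl, hinv]
  -- constants
  set θ : ℝ≥0∞ := min δ 1 / 24 with hθdef
  have hminpos : 0 < min δ 1 := lt_min hδ zero_lt_one
  have hθpos : 0 < θ := ENNReal.div_pos hminpos.ne' (by norm_num)
  have hθ24 : θ ≤ 1/24 := ENNReal.div_le_div_right (min_le_right δ 1) 24
  have hθδ : θ ≤ δ := by
    calc θ = min δ 1 * 24⁻¹ := by rw [hθdef, div_eq_mul_inv]
      _ ≤ min δ 1 * 1 := mul_le_mul_right (ENNReal.inv_le_one.mpr (by norm_num)) _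
      _ = min δ 1 := mul_one _
      _ ≤ δ := min_le_left δ 1
  have h8n_ne_top : ((8:ℝ≥0∞) * n) ≠ ∞ :=
    ENNReal.mul_ne_top (by norm_num) (ENNReal.natCast_ne_top n)
  have h8n_ne_zero : ((8:ℝ≥0∞) * n) ≠ 0 :=
    mul_ne_zero (by norm_num) (Nat.cast_ne_zero.mpr hn0)
  set ε : ℝ≥0∞ := θ / ((8:ℝ≥0∞) * n) with hεdef
  have hεpos : 0 < ε := ENNReal.div_pos hθpos.ne' h8n_ne_top
  have h8nε : (8:ℝ≥0∞) * n * ε ≤ θ := ENNReal.mul_div_le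
  obtain ⟨J₁, hJ₁1, hJ₁⟩ := approx_of_measurable C hA ε hεpos
  obtain ⟨J₂, hJ₂⟩ := tw_compl_small C (1/2) (by norm_num)
  obtain ⟨J₃, hJ₃⟩ := e_small C ((8:ℝ≥0∞) * n)⁻¹ (ENNReal.inv_pos.mpr h8n_ne_top)
  set J := max (max J₁ J₂) J₃ with hJdef
  have hJ1 : 1 ≤ J := le_trans hJ₁1 (le_trans (le_max_left _ _) (le_max_left _ _))
  have hTw : ∀ j, J ≤ j → (1:ℝ≥0∞)/2 ≤ μ (Tw C j) := by
    intro j hj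
    have h2 := hJ₂ j (le_trans (le_trans (le_max_right J₁ J₂) (le_max_left _ J₃)) hj)
    have hsum : μ (Tw C j) + μ ((Tw C j)ᶜ) = 1 := by
      rw [measure_add_measure_compl (measTw C j), measure_univ]
    have h3 : (1:ℝ≥0∞) ≤ μ (Tw C j) + 1/2 := by
      conv_lhs => rw [← hsum]
      exact add_le_add_right h2 _
    have h4 : (1:ℝ≥0∞)/2 + 1/2 ≤ μ (Tw C j) + 1/2 := by
      rw [ENNReal.add_halves]
      exact h3
    exact (ENNReal.add_le_add_iff_right (by norm_num)).mp h4
  have hme : ∀ j, J ≤ j → μ (C.E j) ≠ 0 ∧ μ (C.E j) ≤ ((8:ℝ≥0∞)*n)⁻¹ := by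
    intro j hj
    refine ⟨?_, hJ₃ j (le_trans (le_max_right _ _) hj)⟩
    intro h0
    have h1 := hTw j hj
    rw [measure_Tw C (le_trans hJ1 hj), h0, mul_zero] at h1
    rw [le_zero_iff] at h1
    exact absurd h1 (by simp [ENNReal.div_eq_zero_iff])
  -- the dichotomy at each scale
  have Dich : ∀ j, J ≤ j → ∀ r : ZMod n,
      DW C A n j r ≤ θ * μ (C.E j) ∨ DW C Aᶜ n j r ≤ θ * μ (C.E j) := by
    intro j hj r
    have hj1 : 1 ≤ j := le_trans hJ1 hj
    obtain ⟨S, hSb, hAU⟩ :=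
      hJ₁ j (le_trans (le_trans (le_max_left J₁ J₂) (le_max_left _ J₃)) hj)
    set e := μ (C.E j) with hedef
    set dmin := min (DW C A n j r) (DW C Aᶜ n j r) with hdmin
    set c : ℕ := (C.h j + 1) / n with hcdef
    have hcn1 : c * n ≤ C.h j + 1 := Nat.div_mul_le_self _ _
    have hcn2 : C.h j + 1 ≤ c * n + n := by
      have h1 := Nat.div_add_mod (C.h j + 1) n
      rw [← hcdef] at h1
      have h2 := Nat.mod_lt (C.h j + 1) hnpos
      have h3 : c * n = n * c := Nat.mul_comm c n
      omega
    have hrval : r.val < n := ZMod.val_lt r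
    -- claim 2 : 1 ≤ 8 c n e
    have hc2 : (1:ℝ≥0∞) ≤ 8 * ((c:ℝ≥0∞) * (n:ℝ≥0∞) * e) := by
      have hq1 : (1:ℝ≥0∞)/2 ≤ (c:ℝ≥0∞) * (n:ℝ≥0∞) * e + (n:ℝ≥0∞) * e := by
        refine le_trans (hTw j hj) ?_
        rw [measure_Tw C hj1]
        have hcast : ((C.h j : ℝ≥0∞) + 1) ≤ (c:ℝ≥0∞) * n + n := by
          exact_mod_cast hcn2
        calc ((C.h j : ℝ≥0∞) + 1) * e ≤ ((c:ℝ≥0∞) * n + n) * e :=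
              mul_le_mul_left hcast e
          _ = (c:ℝ≥0∞) * (n:ℝ≥0∞) * e + (n:ℝ≥0∞) * e := by ring
      have h8ne : (8:ℝ≥0∞) * ((n:ℝ≥0∞) * e) ≤ 1 := by
        calc (8:ℝ≥0∞) * ((n:ℝ≥0∞) * e) = ((8:ℝ≥0∞) * n) * e := by ring
          _ ≤ ((8:ℝ≥0∞) * n) * ((8:ℝ≥0∞)*n)⁻¹ := mul_le_mul_right (hme j hj).2 _
          _ = 1 := ENNReal.mul_inv_cancel h8n_ne_zero h8n_ne_top
      have h8 : (8:ℝ≥0∞) * (1/2) = 4 := by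
        rw [show (8:ℝ≥0∞) = 4 * 2 by norm_num, show (1:ℝ≥0∞)/2 = 2⁻¹ by rw [one_div],
          mul_assoc, ENNReal.mul_inv_cancel (by norm_num) (by norm_num), mul_one]
      have h9 : (4:ℝ≥0∞) ≤ 8 * ((c:ℝ≥0∞) * n * e) + 8 * ((n:ℝ≥0∞) * e) := by
        calc (4:ℝ≥0∞) = 8 * (1/2) := h8.symm
          _ ≤ 8 * ((c:ℝ≥0∞) * (n:ℝ≥0∞) * e + (n:ℝ≥0∞) * e) := mul_le_mul_right hq1 8
          _ = 8 * ((c:ℝ≥0∞) * n * e) + 8 * ((n:ℝ≥0∞) * e) := by ring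
      have h10 : (3:ℝ≥0∞) + 1 ≤ 8 * ((c:ℝ≥0∞) * n * e) + 1 := by
        rw [show (3:ℝ≥0∞) + 1 = 4 by norm_num]
        exact le_trans h9 (add_le_add_right h8ne _)
      have h11 : (3:ℝ≥0∞) ≤ 8 * ((c:ℝ≥0∞) * n * e) :=
        (ENNReal.add_le_add_iff_right ENNReal.one_ne_top).mp h10
      exact le_trans (by norm_num) h11
    -- claim 1 : c * dmin ≤ ε
    set U := UF C j S with hUdef
    set V := A ∆ U with hVdef
    have hVm : MeasurableSet V := hA.symmDiff (measUF C j S)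
    set I : Finset ℕ := (Finset.range c).image (fun k => r.val + k * n) with hIdef
    have hIb : ∀ i ∈ I, i ≤ C.h j := by
      intro i hi
      simp only [hIdef, Finset.mem_image, Finset.mem_range] at hi
      obtain ⟨k, hk, rfl⟩ := hi
      have e1 : r.val + k * n < n + k * n := Nat.add_lt_add_right hrval _
      have e2 : n + k * n = (k + 1) * n := by ring
      have e3 : (k + 1) * n ≤ c * n := Nat.mul_le_mul_right n hk
      omega
    have hIcard : I.card = c := by
      rw [hIdef, Finset.card_image_of_injective _ ?inj, Finset.card_range]
      case inj =>
        intro a b hab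
        exact Nat.eq_of_mul_eq_mul_right hnpos (Nat.add_left_cancel hab)
    have hmin_le : ∀ i ∈ I, dmin ≤ μ (V ∩ Lv C j i) := by
      intro i hi
      have hile : i ≤ C.h j := hIb i hi
      simp only [hIdef, Finset.mem_image, Finset.mem_range] at hi
      obtain ⟨k, hk, rfl⟩ := hi
      have hiA : dd C A j (r.val + k * n) = DW C A n j r := dd_add_mul C hinv j r.val k
      have hiAc : dd C Aᶜ j (r.val + k * n) = DW C Aᶜ n j r := dd_add_mul C hinvc j r.val k
      by_cases hiS : (r.val + k * n) ∈ S
      · have hsub : Lv C j (r.val + k * n) ⊆ U :=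
          Set.subset_iUnion₂ (s := fun i' (_ : i' ∈ S) => Lv C j i') _ hiS
        refine le_trans (min_le_right _ _) ?_
        rw [← hiAc]
        refine measure_mono ?_
        rintro x ⟨hxA, hxL⟩
        exact ⟨Set.mem_symmDiff.mpr (Or.inr ⟨hsub hxL, hxA⟩), hxL⟩
      · refine le_trans (min_le_left _ _) ?_
        rw [← hiA]
        refine measure_mono ?_
        rintro x ⟨hxA, hxL⟩
        refine ⟨Set.mem_symmDiff.mpr (Or.inl ⟨hxA, ?_⟩), hxL⟩
        intro hxU
        obtain ⟨i', hi'S, hxi'⟩ := Set.mem_iUnion₂.mp hxU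
        have hne : r.val + k * n ≠ i' := fun hh => hiS (hh ▸ hi'S)
        exact Set.disjoint_left.mp
          (C.tower_disjoint j hj1 _ hile i' (hSb i' hi'S) hne) hxL hxi'
    have hpair : (I : Set ℕ).PairwiseDisjoint (fun i => V ∩ Lv C j i) := by
      intro i hi i' hi' hne
      exact (C.tower_disjoint j hj1 i (hIb i (Finset.mem_coe.mp hi))
        i' (hIb i' (Finset.mem_coe.mp hi')) hne).mono
        Set.inter_subset_right Set.inter_subset_right
    have hcd : (c:ℝ≥0∞) * dmin ≤ ε := by
      calc (c:ℝ≥0∞) * dmin = ∑ _i ∈ I, dmin := by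
            rw [Finset.sum_const, hIcard, nsmul_eq_mul]
        _ ≤ ∑ i ∈ I, μ (V ∩ Lv C j i) := Finset.sum_le_sum hmin_le
        _ = μ (⋃ i ∈ I, V ∩ Lv C j i) :=
            (measure_biUnion_finset hpair (fun i _ => hVm.inter (measLv C j i))).symm
        _ ≤ μ V := measure_mono (Set.iUnion₂_subset fun i _ => Set.inter_subset_left)
        _ ≤ ε := hAU
    have hfin : dmin ≤ θ * e := by
      calc dmin = dmin * 1 := (mul_one _).symm
        _ ≤ dmin * (8 * ((c:ℝ≥0∞) * n * e)) := mul_le_mul_right hc2 dmin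
        _ = (8 * (n:ℝ≥0∞) * e) * ((c:ℝ≥0∞) * dmin) := by ring
        _ ≤ (8 * (n:ℝ≥0∞) * e) * ε := mul_le_mul_right hcd _
        _ = (8 * (n:ℝ≥0∞) * ε) * e := by ring
        _ ≤ θ * e := mul_le_mul_left h8nε e
    exact min_le_iff.mp hfin
  -- the set of residues where `Aᶜ` is thin (i.e. `A` is full)
  classical
  set R : ℕ → Finset (ZMod n) :=
    fun j => Finset.univ.filter (fun r => DW C Aᶜ n j r ≤ θ * μ (C.E j)) with hRdef
  have hRmem : ∀ j (r : ZMod n), r ∈ R j ↔ DW C Aᶜ n j r ≤ θ * μ (C.E j) := by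
    intro j r
    simp [hRdef]
  have hno4 : ∀ j, J ≤ j → ¬ (μ (C.E j) ≤ 4 * θ * μ (C.E j)) := by
    intro j hj hcon
    have h24 : (4:ℝ≥0∞) * (1/24) < 1 := by
      rw [one_div]
      calc (4:ℝ≥0∞) * 24⁻¹ < 24 * 24⁻¹ := by
            rw [ENNReal.mul_lt_mul_iff_left (ENNReal.inv_ne_zero.mpr (by norm_num))
              (ENNReal.inv_ne_top.mpr (by norm_num))]
            norm_num
        _ = 1 := ENNReal.mul_inv_cancel (by norm_num) (by norm_num)
    have h4θ : (4:ℝ≥0∞) * θ < 1 := lt_of_le_of_lt (mul_le_mul_right hθ24 4) h24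
    have hlt : 4 * θ * μ (C.E j) < 1 * μ (C.E j) :=
      (ENNReal.mul_lt_mul_iff_left (hme j hj).1 (measure_ne_top μ _)).mpr h4θ
    rw [one_mul] at hlt
    exact absurd (lt_of_le_of_lt hcon hlt) (lt_irrefl _)
  have hesucc : ∀ j, 1 ≤ j → θ * μ (C.E j) = 3 * (θ * μ (C.E (j+1))) := by
    intro j hj
    rw [e_succ C hj]
    ring
  have hC1 : ∀ j, J ≤ j → ∀ r ∈ R j, r ∈ R (j+1)
      ∧ r + ((C.h j + 1 : ℕ) : ZMod n) ∈ R (j+1)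
      ∧ r + ((2*C.h j + 2 + s j : ℕ) : ZMod n) ∈ R (j+1) := by
    intro j hj r hr
    have hj1 : 1 ≤ j := le_trans hJ1 hj
    rw [hRmem] at hr
    have hdec := DW_decomp C hj1 hA.compl hinvc r
    have hbig : ∀ r' : ZMod n,
        (DW C Aᶜ n (j+1) r' ≤ DW C Aᶜ n j r) → r' ∈ R (j+1) := by
      intro r' hle
      have h3 : DW C Aᶜ n (j+1) r' ≤ 3 * (θ * μ (C.E (j+1))) := by
        refine le_trans hle (le_trans hr ?_)
        rw [hesucc j hj1]
      rcases Dich (j+1) (le_trans hj (Nat.le_succ j)) r' with hcase | hcase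
      · exfalso
        have hsum := (DW_add_compl C hA (j+1) r').symm
        refine hno4 (j+1) (le_trans hj (Nat.le_succ j)) ?_
        calc μ (C.E (j+1)) = DW C A n (j+1) r' + DW C Aᶜ n (j+1) r' := hsum
          _ ≤ θ * μ (C.E (j+1)) + 3 * (θ * μ (C.E (j+1))) := add_le_add hcase h3
          _ = 4 * θ * μ (C.E (j+1)) := by ring
      · exact (hRmem _ _).mpr hcase
    refine ⟨hbig r ?_, hbig _ ?_, hbig _ ?_⟩
    · rw [hdec]
      exact le_self_add.trans le_self_add
    · rw [hdec]
      exact le_add_self.trans le_self_add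
    · rw [hdec]
      exact le_add_self
  have hC2 : ∀ j, J ≤ j → ∀ r : ZMod n, r ∈ R (j+1) → r ∈ R j := by
    intro j hj r hr
    have hj1 : 1 ≤ j := le_trans hJ1 hj
    rw [hRmem] at hr ⊢
    rcases Dich j hj r with hcase | hcase
    · exfalso
      have hdecA := DW_decomp C hj1 hA hinv r
      have hA1 : DW C A n (j+1) r ≤ θ * μ (C.E j) := by
        refine le_trans ?_ hcase
        rw [hdecA]
        exact le_self_add.trans le_self_add
      refine hno4 (j+1) (le_trans hj (Nat.le_succ j)) ?_
      calc μ (C.E (j+1)) = DW C A n (j+1) r + DW C Aᶜ n (j+1) r :=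
            (DW_add_compl C hA (j+1) r).symm
        _ ≤ θ * μ (C.E j) + θ * μ (C.E (j+1)) := add_le_add hA1 hr
        _ = 3 * (θ * μ (C.E (j+1))) + θ * μ (C.E (j+1)) := by rw [hesucc j hj1]
        _ = 4 * θ * μ (C.E (j+1)) := by ring
    · exact hcase
  have hRconst : ∀ j, J ≤ j → R j = R J := by
    intro j hj
    induction j, hj using Nat.le_induction with
    | base => rfl
    | succ j hj ih =>
        rw [← ih]
        ext r
        exact ⟨fun hr => hC2 j hj r hr, fun hr => (hC1 j hj r hr).1⟩
  have hRadd : ∀ j, J ≤ j → ∀ r ∈ R J, r + ((C.h j + 1 : ℕ) : ZMod n) ∈ R J := by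
    intro j hj r hr
    have h1 := (hC1 j hj r (by rw [hRconst j hj]; exact hr)).2.1
    rwa [hRconst (j+1) (le_trans hj (Nat.le_succ j))] at h1
  have hRaddb : ∀ j, J ≤ j → ∀ r ∈ R J,
      r + ((2*C.h j + 2 + s j : ℕ) : ZMod n) ∈ R J := by
    intro j hj r hr
    have h1 := (hC1 j hj r (by rw [hRconst j hj]; exact hr)).2.2
    rwa [hRconst (j+1) (le_trans hj (Nat.le_succ j))] at h1
  have hRsub : ∀ j, J ≤ j → ∀ r ∈ R J, r - ((C.h j + 1 : ℕ) : ZMod n) ∈ R J := by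
    intro j hj r hr
    set a : ZMod n := ((C.h j + 1 : ℕ) : ZMod n) with hadef
    have himg : (R J).image (fun x => x + a) ⊆ R J := by
      intro x hx
      obtain ⟨u, hu, rfl⟩ := Finset.mem_image.mp hx
      exact hRadd j hj u hu
    have heq : (R J).image (fun x => x + a) = R J := by
      refine Finset.eq_of_subset_of_card_le himg ?_
      rw [Finset.card_image_of_injective _ (add_left_injective a)]
    have hrin : r ∈ (R J).image (fun x => x + a) := heq.symm ▸ hr
    obtain ⟨u, hu, huv⟩ := Finset.mem_image.mp hrin
    have hru : r - a = u := by rw [← huv]; ring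
    rwa [hru]
  have hRstep : ∀ j, J ≤ j → ∀ r ∈ R J, r + ((s j : ℕ) : ZMod n) ∈ R J := by
    intro j hj r hr
    have h1 := hRaddb j hj r hr
    have h2 := hRsub j hj _ h1
    have h3 := hRsub j hj _ h2
    have hcast : r + ((2*C.h j + 2 + s j : ℕ) : ZMod n) - ((C.h j + 1 : ℕ) : ZMod n)
        - ((C.h j + 1 : ℕ) : ZMod n) = r + ((s j : ℕ) : ZMod n) := by
      have hnn : (2*C.h j + 2 + s j : ℕ) = (C.h j + 1) + (C.h j + 1) + s j := by ring
      rw [hnn]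
      push_cast
      ring
    rwa [hcast] at h3
  rcases Finset.eq_empty_or_nonempty (R J) with hRe | ⟨r₀, hr₀⟩
  · left
    have hball : ∀ j, J ≤ j → ∀ r : ZMod n, DW C A n j r ≤ θ * μ (C.E j) := by
      intro j hj r
      rcases Dich j hj r with h | h
      · exact h
      · exfalso
        have hrR : r ∈ R j := (hRmem j r).mpr h
        rw [hRconst j hj, hRe] at hrR
        exact absurd hrR (Finset.notMem_empty r)
    exact le_trans (mass_small C hinv hJ1 hball) hθδ
  · right
    obtain ⟨j', hj', hpcop⟩ := hcop J
    set p : ZMod n := ((s j' : ℕ) : ZMod n) with hpdef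
    have hks : ∀ k : ℕ, ∀ r ∈ R J, r + (k : ZMod n) * p ∈ R J := by
      intro k
      induction k with
      | zero => intro r hr; simpa using hr
      | succ k ih =>
          intro r hr
          have h1 := hRstep j' hj' _ (ih r hr)
          have hcast : (r + (k : ZMod n) * p) + p = r + ((k + 1 : ℕ) : ZMod n) * p := by
            push_cast
            ring
          rwa [hcast] at h1
    have huniv : ∀ x : ZMod n, x ∈ R J := by
      intro x
      have hu : IsUnit p :=
        ⟨ZMod.unitOfCoprime (s j') hpcop, ZMod.coe_unitOfCoprime _ _⟩
      obtain ⟨u, hup⟩ := hu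
      set k : ℕ := ((x - r₀) * ↑u⁻¹).val with hkdef
      have hk1 : (k : ZMod n) = (x - r₀) * ↑u⁻¹ := ZMod.natCast_rightInverse _
      have hx : r₀ + (k : ZMod n) * p = x := by
        rw [hk1, ← hup, mul_assoc, Units.inv_mul, mul_one]
        ring
      rw [← hx]
      exact hks k r₀ hr₀
    have hball : ∀ j, J ≤ j → ∀ r : ZMod n, DW C Aᶜ n j r ≤ θ * μ (C.E j) := by
      intro j hj r
      have hrR : r ∈ R j := by
        rw [hRconst j hj]
        exact huniv r
      exact (hRmem j r).mp hrR
    exact le_trans (mass_small C hinvc hJ1 hball) hθδ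

end Prob2
end Chacon2
end PCProof

/-- the prime Chacon map (spacer sequence `s j = p j`, the `j`-th prime)
is totally ergodic. -/
theorem primeChacon_totallyErgodic
    {X : Type*} [MeasurableSpace X] (μ : Measure X) [IsProbabilityMeasure μ]
    (C : ChaconMap μ (fun j => Nat.nth Nat.Prime (j - 1))) :
    ∀ n : ℕ, 1 ≤ n → Ergodic ((⇑C.T)^[n]) μ := by
  intro n hn
  haveI : NeZero n := ⟨Nat.one_le_iff_ne_zero.mp hn⟩
  refine ⟨C.measurePreserving.iterate n, ⟨fun A hA hinv => ?_⟩⟩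
  rw [Filter.eventuallyConst_set']
  have hcop : ∀ J : ℕ, ∃ j, J ≤ j
      ∧ Nat.Coprime ((fun j => Nat.nth Nat.Prime (j - 1)) j) n := by
    intro J
    refine ⟨max J (n + 2), le_max_left _ _, ?_⟩
    simp only
    set m := max J (n + 2) - 1 with hm
    have hp : Nat.Prime (Nat.nth Nat.Prime m) := Nat.prime_nth_prime m
    have hgt : n < Nat.nth Nat.Prime m := by
      have h1 : m + 2 ≤ Nat.nth Nat.Prime m := Nat.add_two_le_nth_prime m
      have h2 : n + 1 ≤ m + 1 := by omega
      omega
    refine (Nat.Prime.coprime_iff_not_dvd hp).mpr (fun hdvd => ?_)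
    have := Nat.le_of_dvd (Nat.pos_of_ne_zero (NeZero.ne n)) hdvd
    omega
  have key := PCProof.key_dichotomy C hA hinv hcop
  have hz : μ A = 0 ∨ μ Aᶜ = 0 := by
    by_contra hcon
    push_neg at hcon
    obtain ⟨h1, h2⟩ := hcon
    have hminpos : 0 < min (μ A) (μ Aᶜ) :=
      lt_min (pos_iff_ne_zero.mpr h1) (pos_iff_ne_zero.mpr h2)
    set δ := min (μ A) (μ Aᶜ) / 2 with hδdef
    have hδpos : 0 < δ := ENNReal.half_pos hminpos.ne'
    rcases key δ hδpos with h | h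
    · have hlt : δ < μ A :=
        lt_of_le_of_lt (ENNReal.div_le_div_right (min_le_left _ _) 2)
          (ENNReal.half_lt_self h1 (measure_ne_top μ A))
      exact absurd h (not_le.mpr hlt)
    · have hlt : δ < μ Aᶜ :=
        lt_of_le_of_lt (ENNReal.div_le_div_right (min_le_right _ _) 2)
          (ENNReal.half_lt_self h2 (measure_ne_top μ Aᶜ))
      exact absurd h (not_le.mpr hlt)
  rcases hz with h | h
  · left
    exact ae_eq_empty.mpr h
  · right
    exact ae_eq_univ.mpr h
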